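/- Let α ∈ ℂ with 0 < |α| < 1 and θ = arg(α)/(2π) irrational. For j ≥ 1 let γ(j) be the unique element of Γ₀ = {-2, 2i, -2i, 1+2i, 1-2i} maximizing Re(γα^j), and suppose Re Φ(α) = 1 where Φ(z) = Σ_{j≥1} γ(j) z^j. For n ≥ 1 let γₙ(j) be the n-periodic extension of γ(1),…,γ(n) and Φₙ(z) = Σ_{j≥1} γₙ(j) zʲ. Then for all sufficiently large n, 0 < Re Φₙ(α) < 1. -/

import Mathlib

open Complex

/-- The finite set Γ₀ = {-2, 2i, -2i, 1+2i, 1-2i}. -/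
noncomputable def Gamma0 : Finset ℂ :=
  {-2, 2 * I, -2 * I, 1 + 2 * I, 1 - 2 * I}

lemma mem_Gamma0_iff {γ' : ℂ} (h : γ' ∈ Gamma0) :
    γ' = -2 ∨ γ' = 2*I ∨ γ' = -2*I ∨ γ' = 1+2*I ∨ γ' = 1-2*I := by
  simpa [Gamma0] using h

lemma neg_two_mem : (-2 : ℂ) ∈ Gamma0 := by simp [Gamma0]

lemma one_sub_two_I_mem : (1 - 2*I : ℂ) ∈ Gamma0 := by simp [Gamma0]

lemma abs_le_three {γ' : ℂ} (h : γ' ∈ Gamma0) : ‖γ'‖ ≤ 3 := by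
  rcases mem_Gamma0_iff h with h | h | h | h | h <;> subst h <;>
    refine le_trans (Complex.norm_le_abs_re_add_abs_im _) ?_ <;> simp <;> norm_num

lemma exists_nat_close_int (β : ℝ) (δ : ℝ) (hδ : 0 < δ) :
    ∃ m : ℕ, 1 ≤ m ∧ ∃ L : ℤ, |(m : ℝ) * β - L| < δ := by
  obtain ⟨N, hN⟩ := exists_nat_gt (1/δ)
  have hN0 : 0 < (N:ℝ) := lt_trans (by positivity) hN
  have hmap : ∀ k : ℕ, (⌊Int.fract ((k:ℝ) * β) * N⌋₊ : ℕ) < N := by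
    intro k
    have h1 : Int.fract ((k:ℝ) * β) * N < N := by
      nlinarith [Int.fract_lt_one ((k:ℝ) * β), Int.fract_nonneg ((k:ℝ) * β)]
    exact (Nat.floor_lt (mul_nonneg (Int.fract_nonneg _) hN0.le)).mpr h1
  have hcard : Fintype.card (Fin N) < Fintype.card (Fin (N+1)) := by simp
  obtain ⟨k1, k2, hne, heq⟩ := Fintype.exists_ne_map_eq_of_card_lt
    (fun k : Fin (N+1) => (⟨⌊Int.fract ((k:ℝ) * β) * N⌋₊, hmap k⟩ : Fin N)) hcard
  wlog hlt : (k1:ℕ) < (k2:ℕ) generalizing k1 k2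
  · have hvne : (k1:ℕ) ≠ (k2:ℕ) := fun h => hne (Fin.ext h)
    exact this k2 k1 hne.symm heq.symm (by omega)
  · set x1 := Int.fract ((k1:ℝ) * β) with hx1
    set x2 := Int.fract ((k2:ℝ) * β) with hx2
    have h1 : (⌊x1 * N⌋₊ : ℝ) ≤ x1 * N := Nat.floor_le (mul_nonneg (Int.fract_nonneg _) hN0.le)
    have h2 : x1 * N < (⌊x1 * N⌋₊ : ℝ) + 1 := Nat.lt_floor_add_one _
    have h3 : (⌊x2 * N⌋₊ : ℝ) ≤ x2 * N := Nat.floor_le (mul_nonneg (Int.fract_nonneg _) hN0.le)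
    have h4 : x2 * N < (⌊x2 * N⌋₊ : ℝ) + 1 := Nat.lt_floor_add_one _
    have heq' : (⌊x1 * N⌋₊ : ℝ) = (⌊x2 * N⌋₊ : ℝ) := by
      have := congrArg Fin.val heq; simp only [] at this; exact_mod_cast this
    have h1N : 1 < δ * N := by
      have := (div_lt_iff₀ hδ).mp hN
      linarith [mul_comm δ (N:ℝ)]
    have hfr : |x2 - x1| < δ := by
      rw [abs_lt]; constructor <;> nlinarith [hN0]
    refine ⟨k2 - k1, by omega, ⌊(k2:ℝ)*β⌋ - ⌊(k1:ℝ)*β⌋, ?_⟩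
    have hcast : ((k2 - k1 : ℕ) : ℝ) = (k2:ℝ) - (k1:ℝ) := by
      have : (k1:ℕ) ≤ (k2:ℕ) := hlt.le
      push_cast [Nat.cast_sub this]; ring
    have hkey : ((k2 - k1 : ℕ) : ℝ) * β - ((⌊(k2:ℝ)*β⌋ - ⌊(k1:ℝ)*β⌋ : ℤ) : ℝ) = x2 - x1 := by
      rw [hcast, hx1, hx2]; unfold Int.fract; push_cast; ring
    rw [hkey]; exact hfr

/-- forward orbit density of irrational rotation -/
lemma forward_dense (β : ℝ) (hβ : Irrational β) (t : ℝ) (ε : ℝ) (hε : 0 < ε) :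
    ∃ k : ℕ, 1 ≤ k ∧ ∃ M : ℤ, |(k : ℝ) * β - t - M| < ε := by
  obtain ⟨m, hm1, L, hmL⟩ := exists_nat_close_int β ε hε
  set x := (m:ℝ) * β - L with hxdef
  have hx0 : x ≠ 0 := by
    intro h
    have hirr : Irrational ((m:ℝ) * β) := by
      have := hβ.natCast_mul (by omega : m ≠ 0); simpa using this
    exact hirr ⟨(L : ℚ), by push_cast; rw [hxdef] at h; linarith⟩
  have hxδ : |x| < ε := hmL
  rcases hx0.lt_or_gt with hxneg | hxpos
  · set c := t - ⌊t⌋ - 1 with hcdef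
    have hc0 : c < 0 := by
      have h3 := Int.lt_floor_add_one t
      simp only [hcdef]; linarith
    have hcx : 0 < c / x := div_pos_of_neg_of_neg hc0 hxneg
    set k := ⌈c / x⌉₊ with hkdef
    have hk1 : 1 ≤ k := Nat.one_le_ceil_iff.mpr hcx
    have hkle : c / x ≤ (k:ℝ) := Nat.le_ceil _
    have hklt : (k:ℝ) < c / x + 1 := Nat.ceil_lt_add_one hcx.le
    have hkx_le : (k:ℝ) * x ≤ c := by
      have := mul_le_mul_of_nonpos_right hkle (le_of_lt hxneg)
      rwa [div_mul_cancel₀ _ hx0] at this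
    have hkx_gt : c + x < (k:ℝ) * x := by
      have := mul_lt_mul_of_neg_right hklt hxneg
      rw [add_mul, one_mul, div_mul_cancel₀ _ hx0] at this
      linarith
    refine ⟨k * m, Nat.one_le_iff_ne_zero.mpr (by positivity), k * L + (-⌊t⌋ - 1), ?_⟩
    have : ((k * m : ℕ) : ℝ) * β - t - ((k * L + (-⌊t⌋ - 1) : ℤ) : ℝ) = (k:ℝ) * x - c := by
      rw [hxdef, hcdef]; push_cast; ring
    rw [this, abs_lt]
    exact ⟨by nlinarith [abs_lt.mp hxδ], by nlinarith [abs_lt.mp hxδ]⟩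
  · set c := t - ⌊t⌋ + 1 with hcdef
    have hc0 : 0 < c := by
      have h2 := Int.floor_le t
      simp only [hcdef]; linarith
    have hcx : 0 < c / x := div_pos hc0 hxpos
    set k := ⌈c / x⌉₊ with hkdef
    have hk1 : 1 ≤ k := Nat.one_le_ceil_iff.mpr hcx
    have hkle : c / x ≤ (k:ℝ) := Nat.le_ceil _
    have hklt : (k:ℝ) < c / x + 1 := Nat.ceil_lt_add_one hcx.le
    have hkx_ge : c ≤ (k:ℝ) * x := by
      have := mul_le_mul_of_nonneg_right hkle (le_of_lt hxpos)
      rwa [div_mul_cancel₀ _ hx0] at this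
    have hkx_lt : (k:ℝ) * x < c + x := by
      have := mul_lt_mul_of_pos_right hklt hxpos
      rw [add_mul, one_mul, div_mul_cancel₀ _ hx0] at this
      linarith
    refine ⟨k * m, Nat.one_le_iff_ne_zero.mpr (by positivity), k * L + (-⌊t⌋ + 1), ?_⟩
    have : ((k * m : ℕ) : ℝ) * β - t - ((k * L + (-⌊t⌋ + 1) : ℤ) : ℝ) = (k:ℝ) * x - c := by
      rw [hxdef, hcdef]; push_cast; ring
    rw [this, abs_lt]
    exact ⟨by nlinarith [abs_lt.mp hxδ], by nlinarith [abs_lt.mp hxδ]⟩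

lemma arc_lemma (m : ℂ) (ψ0 : ℝ)
    (h : ∀ γ' ∈ Gamma0, γ' ≠ m → 0 < ((m - γ') * Complex.exp (ψ0 * I)).re) :
    ∃ ε : ℝ, 0 < ε ∧ ∀ ψ : ℝ, |ψ - ψ0| < ε → ∀ γ' ∈ Gamma0, γ' ≠ m →
      (γ' * Complex.exp (ψ * I)).re < (m * Complex.exp (ψ * I)).re := by
  have hev : ∀ᶠ ψ : ℝ in nhds ψ0, ∀ γ' ∈ Gamma0, γ' ≠ m →
      0 < ((m - γ') * Complex.exp (ψ * I)).re := by
    rw [Filter.eventually_all_finset]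
    intro γ' hγ'
    by_cases hne : γ' = m
    · filter_upwards with ψ hne'; exact absurd hne hne'
    · have hcont : Continuous fun ψ : ℝ => ((m - γ') * Complex.exp (ψ * I)).re :=
        Complex.continuous_re.comp (continuous_const.mul ((Complex.continuous_ofReal.mul
          continuous_const).cexp))
      have := (hcont.continuousAt (x := ψ0)).eventually_const_lt (h γ' hγ' hne)
      filter_upwards [this] with ψ hψ _; exact hψ
  rw [Metric.eventually_nhds_iff] at hev
  obtain ⟨ε, hε, hball⟩ := hev
  refine ⟨ε, hε, fun ψ hψ γ' hγ' hne => ?_⟩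
  have h2 := hball (show dist ψ ψ0 < ε by rwa [Real.dist_eq]) γ' hγ' hne
  have hexp : ((m - γ') * Complex.exp (ψ * I)).re
      = (m * Complex.exp (ψ * I)).re - (γ' * Complex.exp (ψ * I)).re := by
    rw [sub_mul, sub_re]
  linarith [hexp ▸ h2]

lemma arc_pi : ∀ γ' ∈ Gamma0, γ' ≠ -2 →
    0 < (((-2 : ℂ) - γ') * Complex.exp ((Real.pi:ℝ) * I)).re := by
  intro γ' hγ' hne
  rw [Complex.exp_pi_mul_I]
  rcases mem_Gamma0_iff hγ' with h | h | h | h | h <;> subst h <;> simp_all <;> norm_num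

lemma arc_pi_div_three : ∀ γ' ∈ Gamma0, γ' ≠ 1 - 2*I →
    0 < (((1 - 2*I : ℂ) - γ') * Complex.exp (((Real.pi/3 : ℝ)) * I)).re := by
  intro γ' hγ' hne
  have hcos : Complex.cos ((Real.pi/3 : ℝ):ℂ) = ((1/2:ℝ):ℂ) := by
    rw [← Complex.ofReal_cos, Real.cos_pi_div_three]
  have hsin : Complex.sin ((Real.pi/3 : ℝ):ℂ) = ((Real.sqrt 3/2:ℝ):ℂ) := by
    rw [← Complex.ofReal_sin, Real.sin_pi_div_three]
  rw [Complex.exp_mul_I, hcos, hsin]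
  have h3 : 1 < Real.sqrt 3 := by
    rw [show (1:ℝ) = Real.sqrt 1 by simp]
    exact Real.sqrt_lt_sqrt (by norm_num) (by norm_num)
  rcases mem_Gamma0_iff hγ' with h | h | h | h | h <;> subst h <;>
    simp_all [Complex.add_re, Complex.mul_re, Complex.sub_re, Complex.I_re, Complex.I_im,
      Complex.ofReal_re, Complex.ofReal_im] <;> norm_num <;> nlinarith

lemma pow_eq_abs_mul_exp (α : ℂ) (hα0 : α ≠ 0) (j : ℕ) (M : ℤ) :
    α ^ j = ((‖α‖ ^ j : ℝ) : ℂ) *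
      Complex.exp ((((j:ℝ) * Complex.arg α - 2*Real.pi*M : ℝ)) * I) := by
  conv_lhs => rw [← Complex.norm_mul_exp_arg_mul_I α]
  rw [mul_pow, ← Complex.exp_nat_mul, Complex.ofReal_pow]
  congr 1
  have : ((j:ℂ) * ((Complex.arg α : ℂ) * I))
      = (((j:ℝ) * Complex.arg α - 2*Real.pi*M : ℝ) : ℂ) * I + (M:ℂ) * (2*(Real.pi:ℂ)*I) := by
    push_cast; ring
  rw [this, Complex.exp_add, Complex.exp_int_mul_two_pi_mul_I, mul_one]

/-- If |α| < 1, arg(α)/(2π) is irrational, γ(j) ∈ Γ₀ maximizes Re(γαʲ), and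
Re Φ(α) = 1 where Φ(z) = Σ_{j≥1} γ(j)zʲ, then for all large n the truncated
rational approximation Φₙ(α) = (1−αⁿ)⁻¹ Σ_{j=1}^n γ(j)αʲ satisfies
0 < Re Φₙ(α) < 1. -/
theorem re_Phi_n_between_zero_and_one (α : ℂ) (hα0 : α ≠ 0)
    (habs : ‖α‖ < 1) (hθ : Irrational (Complex.arg α / (2 * Real.pi)))
    (γ : ℕ → ℂ)
    (hγ : ∀ j : ℕ, 1 ≤ j → γ j ∈ Gamma0 ∧
      ∀ γ' ∈ Gamma0, (γ' * α ^ j).re ≤ (γ j * α ^ j).re)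
    (hPhi : (∑' j : ℕ, γ (j + 1) * α ^ (j + 1)).re = 1) :
    ∃ N : ℕ, ∀ n : ℕ, N ≤ n → 1 ≤ n →
      0 < (((1 - α ^ n)⁻¹ * ∑ j ∈ Finset.range n, γ (j + 1) * α ^ (j + 1)).re) ∧
      (((1 - α ^ n)⁻¹ * ∑ j ∈ Finset.range n, γ (j + 1) * α ^ (j + 1)).re) < 1 := by
  set r := ‖α‖ with hrdef
  have hr0 : 0 < r := by simpa [hrdef] using (norm_pos_iff.mpr hα0)
  have hπ : 0 < Real.pi := Real.pi_pos
  set a := Complex.arg α with hadef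
  -- summability
  have hsum_of : ∀ (g : ℕ → ℂ), (∀ i, g i ∈ Gamma0) → Summable (fun i => g i * α^(i+1)) := by
    intro g hg
    apply Summable.of_norm_bounded (g := fun i => (3*r) * r^i)
    · exact (summable_geometric_of_lt_one hr0.le habs).mul_left _
    · intro i
      rw [norm_mul]
      have h1 : ‖g i‖ ≤ 3 := abs_le_three (hg i)
      have h2 : ‖α^(i+1)‖ = r^(i+1) := by
        rw [norm_pow]
      rw [h2, pow_succ']
      have : (0:ℝ) ≤ r^i := pow_nonneg hr0.le i
      calc ‖g i‖ * (r * r^i) ≤ 3 * (r * r^i) := by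
            apply mul_le_mul_of_nonneg_right h1 (by positivity)
      _ = 3*r*r^i := by ring
  have hγΓ : ∀ i : ℕ, γ (i+1) ∈ Gamma0 := fun i => (hγ (i+1) (Nat.le_add_left 1 _)).1
  have hsf : Summable (fun i => γ (i+1) * α^(i+1)) := hsum_of _ hγΓ
  -- strict upper bound for every n ≥ 1
  have upper : ∀ n : ℕ, 1 ≤ n →
      (((1 - α ^ n)⁻¹ * ∑ j ∈ Finset.range n, γ (j + 1) * α ^ (j + 1)).re) < 1 := by
    intro n hn
    set gp : ℕ → ℂ := fun i => γ (i % n + 1) with hgpdef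
    have hgpΓ : ∀ i, gp i ∈ Gamma0 := fun i => (hγ (i % n + 1) (Nat.le_add_left 1 _)).1
    have hsg : Summable (fun i => gp i * α^(i+1)) := hsum_of _ hgpΓ
    set T := ∑' i, gp i * α^(i+1) with hTdef
    set S := ∑ j ∈ Finset.range n, γ (j + 1) * α ^ (j + 1) with hSdef
    -- T = S + α^n T
    have hTid : T = S + α^n * T := by
      have hsplit := (Summable.sum_add_tsum_nat_add n hsg).symm
      have hhead : ∑ i ∈ Finset.range n, gp i * α^(i+1) = S := by
        apply Finset.sum_congr rfl
        intro i hi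
        have : i % n = i := Nat.mod_eq_of_lt (Finset.mem_range.mp hi)
        simp [hgpdef, this]
      have htail : ∑' i, gp (i + n) * α^(i + n + 1) = α^n * T := by
        have hterm : ∀ i : ℕ, gp (i + n) * α^(i + n + 1) = α^n * (gp i * α^(i+1)) := by
          intro i
          have h1 : (i + n) % n = i % n := Nat.add_mod_right i n
          have h2 : α^(i + n + 1) = α^n * α^(i+1) := by ring
          simp [hgpdef, h1, h2]; ring
        rw [tsum_congr hterm, tsum_mul_left]
      calc T = ∑ i ∈ Finset.range n, gp i * α^(i+1) + ∑' i, gp (i + n) * α^(i + n + 1) := hsplit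
      _ = S + α^n * T := by rw [hhead, htail]
    have hrn : r^n < 1 := pow_lt_one₀ hr0.le habs (by omega)
    have hαn1 : α ^ n ≠ 1 := by
      intro h
      have : ‖α^n‖ = 1 := by rw [h]; simp
      rw [norm_pow] at this
      rw [← hrdef] at this
      linarith
    have h1mn : (1:ℂ) - α^n ≠ 0 := sub_ne_zero.mpr (Ne.symm hαn1)
    have hgoal_eq : (1 - α^n)⁻¹ * S = T := by
      have hS : S = (1 - α^n) * T := by linear_combination -hTid
      rw [hS, inv_mul_cancel_left₀ h1mn]
    rw [hgoal_eq]
    -- choose arc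
    obtain ⟨m, ψ0, hmΓ, hmne, ε, hε, harc⟩ :
        ∃ (m : ℂ) (ψ0 : ℝ), m ∈ Gamma0 ∧ γ 1 ≠ m ∧ ∃ ε : ℝ, 0 < ε ∧
          ∀ ψ : ℝ, |ψ - ψ0| < ε → ∀ γ' ∈ Gamma0, γ' ≠ m →
            (γ' * Complex.exp (ψ * I)).re < (m * Complex.exp (ψ * I)).re := by
      by_cases hc : γ 1 = -2
      · obtain ⟨ε, hε, harc⟩ := arc_lemma (1 - 2*I) (Real.pi/3) arc_pi_div_three
        refine ⟨1 - 2*I, Real.pi/3, one_sub_two_I_mem, ?_, ε, hε, harc⟩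
        rw [hc]
        intro h
        have := congrArg Complex.im h
        simp at this
      · obtain ⟨ε, hε, harc⟩ := arc_lemma (-2) Real.pi arc_pi
        exact ⟨-2, Real.pi, neg_two_mem, hc, ε, hε, harc⟩
    -- density
    have hβ : Irrational ((n:ℝ) * (a / (2 * Real.pi))) :=
      hθ.natCast_mul (by omega)
    obtain ⟨k, hk1, M, hkM⟩ := forward_dense _ hβ (ψ0/(2*Real.pi) - a/(2*Real.pi))
      (ε/(2*Real.pi)) (by positivity)
    set j := k * n + 1 with hjdef
    set ψ := (j:ℝ) * a - 2*Real.pi*M with hψdef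
    have hψ0 : |ψ - ψ0| < ε := by
      have hrw : ψ - ψ0 = (2*Real.pi) *
          ((k:ℝ) * ((n:ℝ) * (a / (2 * Real.pi))) - (ψ0/(2*Real.pi) - a/(2*Real.pi)) - M) := by
        rw [hψdef, hjdef]
        push_cast
        field_simp
        ring
      rw [hrw, abs_mul, abs_of_pos (by positivity : (0:ℝ) < 2*Real.pi)]
      calc (2*Real.pi) * |(k:ℝ) * ((n:ℝ) * (a / (2 * Real.pi))) - (ψ0/(2*Real.pi) - a/(2*Real.pi)) - M|
          < (2*Real.pi) * (ε/(2*Real.pi)) := by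
            apply mul_lt_mul_of_pos_left hkM (by positivity)
      _ = ε := by field_simp
    have hαj : α ^ j = ((r^j : ℝ) : ℂ) * Complex.exp ((ψ:ℝ) * I) :=
      pow_eq_abs_mul_exp α hα0 j M
    have hrj : (0:ℝ) < r^j := pow_pos hr0 j
    have hre : ∀ z : ℂ, (z * α^j).re = r^j * (z * Complex.exp ((ψ:ℝ) * I)).re := by
      intro z
      rw [hαj, show z * (((r^j : ℝ) : ℂ) * Complex.exp ((ψ:ℝ) * I))
        = ((r^j : ℝ) : ℂ) * (z * Complex.exp ((ψ:ℝ) * I)) by ring, Complex.re_ofReal_mul]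
    have hstrict : (γ 1 * α^j).re < (γ j * α^j).re := by
      have h1 : (γ 1 * α^j).re < (m * α^j).re := by
        rw [hre, hre]
        exact mul_lt_mul_of_pos_left
          (harc ψ hψ0 (γ 1) (by simpa using hγΓ 0) hmne) hrj
      have h2 : (m * α^j).re ≤ (γ j * α^j).re := (hγ j (by omega)).2 m hmΓ
      linarith
    -- sum of gaps
    set D : ℕ → ℝ := fun i => (γ (i+1) * α^(i+1)).re - (gp i * α^(i+1)).re with hDdef
    have hD0 : ∀ i, 0 ≤ D i := by
      intro i
      exact sub_nonneg.mpr ((hγ (i+1) (Nat.le_add_left 1 _)).2 (gp i) (hgpΓ i))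
    have hsfre : Summable (fun i => (γ (i+1) * α^(i+1)).re) := (Complex.hasSum_re hsf.hasSum).summable
    have hsgre : Summable (fun i => (gp i * α^(i+1)).re) := (Complex.hasSum_re hsg.hasSum).summable
    have hDsum : Summable D := hsfre.sub hsgre
    have hDk : D (k*n) = (γ j * α^j).re - (γ 1 * α^j).re := by
      have h1 : (k*n) % n = 0 := Nat.mul_mod_left k n
      simp only [hDdef, hgpdef, h1, zero_add, hjdef]
    have hDkpos : 0 < D (k*n) := by rw [hDk]; linarith
    have htsumD : 0 < ∑' i, D i :=
      lt_of_lt_of_le hDkpos (Summable.le_tsum hDsum (k*n) (fun i _ => hD0 i))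
    have hTre : T.re = 1 - ∑' i, D i := by
      have h1 : ∑' i, D i = (∑' i, (γ (i+1) * α^(i+1)).re) - ∑' i, (gp i * α^(i+1)).re :=
        Summable.tsum_sub hsfre hsgre
      rw [h1, ← Complex.re_tsum hsf, ← Complex.re_tsum hsg, hPhi, ← hTdef]
      ring
    rw [hTre]
    linarith
  -- lower bound eventually
  have hS_tend : Filter.Tendsto (fun n => ∑ j ∈ Finset.range n, γ (j+1) * α^(j+1))
      Filter.atTop (nhds (∑' i, γ (i+1) * α^(i+1))) := hsf.hasSum.tendsto_sum_nat
  have hpow : Filter.Tendsto (fun n : ℕ => α^n) Filter.atTop (nhds 0) :=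
    tendsto_pow_atTop_nhds_zero_of_norm_lt_one habs
  have hinv : Filter.Tendsto (fun n : ℕ => (1 - α^n)⁻¹) Filter.atTop (nhds 1) := by
    have h := (Filter.Tendsto.sub (tendsto_const_nhds (x := (1:ℂ))) hpow).inv₀ (by norm_num)
    simpa using h
  have hmul : Filter.Tendsto
      (fun n => ((1 - α^n)⁻¹ * ∑ j ∈ Finset.range n, γ (j+1) * α^(j+1)).re)
      Filter.atTop (nhds 1) := by
    have h := hinv.mul hS_tend
    rw [one_mul] at h
    have h2 := (Complex.continuous_re.tendsto _).comp h
    rw [hPhi] at h2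
    exact h2
  have hev : ∀ᶠ n in Filter.atTop,
      0 < ((1 - α^n)⁻¹ * ∑ j ∈ Finset.range n, γ (j+1) * α^(j+1)).re :=
    hmul.eventually_const_lt (by norm_num)
  obtain ⟨N, hN⟩ := Filter.eventually_atTop.mp hev
  exact ⟨N, fun n hn h1n => ⟨hN n hn, upper n h1n⟩⟩
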